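/- arXiv:1306.4009 — 2 statements merged into one kernel-verified Lean document; each statement's English description precedes it below -/
import Mathlib

section
/- (Corollary on sufficient conditions for zero loss.) Let N ≥ 1, let L be any one of the four Gray labelings GC1, GC2, GC3, GC4, and let B be a ZMod 2-submodule of (Fin N → ZMod 2 × ZMod 2) containing at least two elements. Suppose B contains codewords b'' and b''' such that (b'' k).1 = 1 for all k and (b''' k).2 = 1 for all k. Then the minimum of a^X(x_b, x_b̂) over pairs b ≠ b̂ in B equals the minimum of a^B(x_b, x_b̂) over such pairs; i.e., the asymptotic loss L(B) of the bit-wise decoder is zero. -/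
open Finset

noncomputable section

/-- Pairwise weight of a pair of 4-PAM symbols: `1` if `|i−j| ∈ {1,3}`,
`4` if `|i−j| = 2`, `0` if `i = j`. -/
def pw (i j : Fin 4) : ℝ :=
  if i = j then 0 else if ((i : ℤ) - (j : ℤ)).natAbs = 2 then 4 else 1

/-- Corner count: number of positions where the symbol pair is `(s₁,s₄)` or `(s₄,s₁)`. -/
def wc {N : ℕ} (x xh : Fin N → Fin 4) : ℕ :=
  (Finset.univ.filter fun k =>
    (x k, xh k) = ((0 : Fin 4), (3 : Fin 4)) ∨ (x k, xh k) = ((3 : Fin 4), (0 : Fin 4))).card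

/-- Weighted error count `β(x, x̂)`. -/
def betaW {N : ℕ} (x xh : Fin N → Fin 4) : ℝ := ∑ k, pw (x k) (xh k)

/-- Normalized distance of the symbol-wise decoder: `a^X = √(β + 8 w_c)`. -/
def aX {N : ℕ} (x xh : Fin N → Fin 4) : ℝ :=
  Real.sqrt (betaW x xh + 8 * wc x xh)

/-- Normalized distance of the bit-wise decoder: `a^B = (β + 2 w_c)/√β`. -/
def aB {N : ℕ} (x xh : Fin N → Fin 4) : ℝ :=
  (betaW x xh + 2 * wc x xh) / Real.sqrt (betaW x xh)

/-- The Gray labeling GC1 (binary reflected Gray code) for 4-PAM. -/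
def GC1 : Fin 4 ≃ (ZMod 2 × ZMod 2) where
  toFun := ![(0, 0), (0, 1), (1, 1), (1, 0)]
  invFun := fun p => if p = (0, 0) then 0 else if p = (0, 1) then 1
    else if p = (1, 1) then 2 else 3
  left_inv := by decide
  right_inv := by decide

/-- The Gray labeling GC2 for 4-PAM. -/
def GC2 : Fin 4 ≃ (ZMod 2 × ZMod 2) where
  toFun := ![(0, 0), (1, 0), (1, 1), (0, 1)]
  invFun := fun p => if p = (0, 0) then 0 else if p = (1, 0) then 1
    else if p = (1, 1) then 2 else 3
  left_inv := by decide
  right_inv := by decide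

/-- The Gray labeling GC3 for 4-PAM. -/
def GC3 : Fin 4 ≃ (ZMod 2 × ZMod 2) where
  toFun := ![(0, 1), (0, 0), (1, 0), (1, 1)]
  invFun := fun p => if p = (0, 1) then 0 else if p = (0, 0) then 1
    else if p = (1, 0) then 2 else 3
  left_inv := by decide
  right_inv := by decide

/-- The Gray labeling GC4 for 4-PAM. -/
def GC4 : Fin 4 ≃ (ZMod 2 × ZMod 2) where
  toFun := ![(1, 0), (0, 0), (0, 1), (1, 1)]
  invFun := fun p => if p = (1, 0) then 0 else if p = (0, 0) then 1
    else if p = (0, 1) then 2 else 3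
  left_inv := by decide
  right_inv := by decide

/-- Symbol sequence corresponding to a binary codeword under labeling `L`. -/
def xb {N : ℕ} (L : Fin 4 ≃ (ZMod 2 × ZMod 2)) (b : Fin N → ZMod 2 × ZMod 2) :
    Fin N → Fin 4 := fun k => L.symm (b k)

end

/-- Natural-valued version of `pw`. -/
def pwN (i j : Fin 4) : ℕ :=
  if i = j then 0 else if ((i : ℤ) - (j : ℤ)).natAbs = 2 then 4 else 1

lemma pw_eq_pwN (i j : Fin 4) : pw i j = (pwN i j : ℝ) := by
  unfold pw pwN; split_ifs <;> norm_num

lemma pw_nonneg (i j : Fin 4) : 0 ≤ pw i j := by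
  unfold pw; split_ifs <;> norm_num

lemma one_le_pw (i j : Fin 4) (h : i ≠ j) : 1 ≤ pw i j := by
  unfold pw; rw [if_neg h]; split_ifs <;> norm_num

lemma wc_le_betaW {N : ℕ} (x xh : Fin N → Fin 4) : (wc x xh : ℝ) ≤ betaW x xh := by
  classical
  unfold wc betaW
  rw [Finset.card_eq_sum_ones]
  push_cast
  calc (∑ _k ∈ Finset.univ.filter fun k =>
        (x k, xh k) = ((0 : Fin 4), (3 : Fin 4)) ∨ (x k, xh k) = ((3 : Fin 4), (0 : Fin 4)),
          (1 : ℝ))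
      ≤ ∑ k ∈ Finset.univ.filter fun k =>
        (x k, xh k) = ((0 : Fin 4), (3 : Fin 4)) ∨ (x k, xh k) = ((3 : Fin 4), (0 : Fin 4)),
          pw (x k) (xh k) := by
        refine Finset.sum_le_sum fun k hk => ?_
        have hk' := (Finset.mem_filter.mp hk).2
        rcases hk' with h | h
        · have h1 : x k = 0 := congrArg Prod.fst h
          have h2 : xh k = 3 := congrArg Prod.snd h
          rw [h1, h2, pw_eq_pwN]
          have h3 : pwN 0 3 = 1 := by decide
          rw [h3]; norm_num
        · have h1 : x k = 3 := congrArg Prod.fst h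
          have h2 : xh k = 0 := congrArg Prod.snd h
          rw [h1, h2, pw_eq_pwN]
          have h3 : pwN 3 0 = 1 := by decide
          rw [h3]; norm_num
    _ ≤ ∑ k, pw (x k) (xh k) :=
        Finset.sum_le_sum_of_subset_of_nonneg (Finset.filter_subset _ _)
          (fun k _ _ => pw_nonneg _ _)

lemma betaW_nonneg {N : ℕ} (x xh : Fin N → Fin 4) : 0 ≤ betaW x xh :=
  Finset.sum_nonneg fun k _ => pw_nonneg _ _

lemma betaW_pos {N : ℕ} (x xh : Fin N → Fin 4) (h : ∃ k, x k ≠ xh k) :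
    0 < betaW x xh := by
  obtain ⟨k, hk⟩ := h
  refine Finset.sum_pos' (fun i _ => pw_nonneg _ _) ⟨k, Finset.mem_univ k, ?_⟩
  linarith [one_le_pw (x k) (xh k) hk]

lemma sqrt_le_aB {N : ℕ} (x xh : Fin N → Fin 4) (h : 0 < betaW x xh) :
    Real.sqrt (betaW x xh) ≤ aB x xh := by
  unfold aB
  rw [le_div_iff₀ (Real.sqrt_pos.mpr h), Real.mul_self_sqrt h.le]
  have h0 : (0:ℝ) ≤ (wc x xh : ℝ) := Nat.cast_nonneg _
  linarith

lemma aB_le_aX {N : ℕ} (x xh : Fin N → Fin 4) (h : 0 < betaW x xh) :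
    aB x xh ≤ aX x xh := by
  unfold aB aX
  set β := betaW x xh with hβ
  set w := (wc x xh : ℝ) with hw
  have hw0 : 0 ≤ w := Nat.cast_nonneg _
  have hwβ : w ≤ β := wc_le_betaW x xh
  have hs : 0 < Real.sqrt β := Real.sqrt_pos.mpr h
  rw [div_le_iff₀ hs]
  calc β + 2 * w = Real.sqrt ((β + 2 * w) ^ 2) := (Real.sqrt_sq (by linarith)).symm
    _ ≤ Real.sqrt ((β + 8 * w) * β) := by
        apply Real.sqrt_le_sqrt
        nlinarith [mul_le_mul_of_nonneg_left hwβ hw0]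
    _ = Real.sqrt (β + 8 * w) * Real.sqrt β :=
        Real.sqrt_mul (by linarith) β

lemma aux_main (N : ℕ) (L : Fin 4 ≃ (ZMod 2 × ZMod 2))
    (B : Submodule (ZMod 2) (Fin N → ZMod 2 × ZMod 2))
    (hB : (B : Set (Fin N → ZMod 2 × ZMod 2)).Nontrivial)
    (b₀ : Fin N → ZMod 2 × ZMod 2) (hb₀ : b₀ ∈ B)
    (hshift : ∀ p q s : ZMod 2 × ZMod 2,
      pwN (L.symm s) (L.symm (s + (p - q))) = pwN (L.symm p) (L.symm q))
    (hnc : ∀ k, L.symm (b₀ k) ≠ 0 ∧ L.symm (b₀ k) ≠ 3) :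
    sInf {r : ℝ | ∃ b ∈ B, ∃ bh ∈ B, b ≠ bh ∧ r = aX (xb L b) (xb L bh)}
      = sInf {r : ℝ | ∃ b ∈ B, ∃ bh ∈ B, b ≠ bh ∧ r = aB (xb L b) (xb L bh)} := by
  classical
  obtain ⟨u, huB, v, hvB, huv⟩ := hB
  have hbddX : BddBelow {r : ℝ | ∃ b ∈ B, ∃ bh ∈ B, b ≠ bh ∧ r = aX (xb L b) (xb L bh)} := by
    refine ⟨0, ?_⟩
    rintro r ⟨b, _, bh, _, _, rfl⟩
    exact Real.sqrt_nonneg _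
  have hbddB : BddBelow {r : ℝ | ∃ b ∈ B, ∃ bh ∈ B, b ≠ bh ∧ r = aB (xb L b) (xb L bh)} := by
    refine ⟨0, ?_⟩
    rintro r ⟨b, _, bh, _, _, rfl⟩
    refine div_nonneg ?_ (Real.sqrt_nonneg _)
    have := betaW_nonneg (xb L b) (xb L bh)
    have h0 : (0:ℝ) ≤ (wc (xb L b) (xb L bh) : ℝ) := Nat.cast_nonneg _
    linarith
  have hkey : ∀ b ∈ B, ∀ bh ∈ B, b ≠ bh →
      0 < betaW (xb L b) (xb L bh) := by
    intro b _ bh _ hne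
    apply betaW_pos
    obtain ⟨k, hk⟩ := Function.ne_iff.mp hne
    exact ⟨k, fun h => hk (L.symm.injective h)⟩
  refine le_antisymm (le_csInf ⟨_, u, huB, v, hvB, huv, rfl⟩ ?_)
    (le_csInf ⟨_, u, huB, v, hvB, huv, rfl⟩ ?_)
  · rintro r ⟨b, hbB, bh, hbhB, hne, rfl⟩
    have hβpos := hkey b hbB bh hbhB hne
    have hmem : b₀ + (b - bh) ∈ B := B.add_mem hb₀ (B.sub_mem hbB hbhB)
    have hnec : b₀ ≠ b₀ + (b - bh) := by
      intro h
      exact hne (sub_eq_zero.mp (left_eq_add.mp h))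
    have hwc0 : wc (xb L b₀) (xb L (b₀ + (b - bh))) = 0 := by
      unfold wc
      rw [Finset.card_eq_zero, Finset.filter_eq_empty_iff]
      intro k _
      rintro (h | h)
      · exact (hnc k).1 (congrArg Prod.fst h)
      · exact (hnc k).2 (congrArg Prod.fst h)
    have hβeq : betaW (xb L b₀) (xb L (b₀ + (b - bh))) = betaW (xb L b) (xb L bh) := by
      unfold betaW xb
      refine Finset.sum_congr rfl fun k _ => ?_
      rw [pw_eq_pwN, pw_eq_pwN]
      exact_mod_cast congrArg (fun n : ℕ => (n : ℝ)) (hshift (b k) (bh k) (b₀ k))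
    calc sInf {r : ℝ | ∃ b ∈ B, ∃ bh ∈ B, b ≠ bh ∧ r = aX (xb L b) (xb L bh)}
        ≤ aX (xb L b₀) (xb L (b₀ + (b - bh))) :=
          csInf_le hbddX ⟨b₀, hb₀, b₀ + (b - bh), hmem, hnec, rfl⟩
      _ = Real.sqrt (betaW (xb L b) (xb L bh)) := by
          unfold aX; rw [hwc0, hβeq]; norm_num
      _ ≤ aB (xb L b) (xb L bh) := sqrt_le_aB _ _ hβpos
  · rintro r ⟨b, hbB, bh, hbhB, hne, rfl⟩
    exact le_trans (csInf_le hbddB ⟨b, hbB, bh, hbhB, hne, rfl⟩)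
      (aB_le_aX _ _ (hkey b hbB bh hbhB hne))

lemma shiftGC1 : ∀ p q s : ZMod 2 × ZMod 2,
    pwN (GC1.symm s) (GC1.symm (s + (p - q))) = pwN (GC1.symm p) (GC1.symm q) := by decide
lemma shiftGC2 : ∀ p q s : ZMod 2 × ZMod 2,
    pwN (GC2.symm s) (GC2.symm (s + (p - q))) = pwN (GC2.symm p) (GC2.symm q) := by decide
lemma shiftGC3 : ∀ p q s : ZMod 2 × ZMod 2,
    pwN (GC3.symm s) (GC3.symm (s + (p - q))) = pwN (GC3.symm p) (GC3.symm q) := by decide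
lemma shiftGC4 : ∀ p q s : ZMod 2 × ZMod 2,
    pwN (GC4.symm s) (GC4.symm (s + (p - q))) = pwN (GC4.symm p) (GC4.symm q) := by decide

lemma ncGC1 : ∀ s : ZMod 2 × ZMod 2, s.2 = 1 → GC1.symm s ≠ 0 ∧ GC1.symm s ≠ 3 := by decide
lemma ncGC2 : ∀ s : ZMod 2 × ZMod 2, s.1 = 1 → GC2.symm s ≠ 0 ∧ GC2.symm s ≠ 3 := by decide
lemma ncGC3 : GC3.symm ((0,0) : ZMod 2 × ZMod 2) ≠ 0 ∧ GC3.symm ((0,0) : ZMod 2 × ZMod 2) ≠ 3 := by decide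
lemma ncGC4 : GC4.symm ((0,0) : ZMod 2 × ZMod 2) ≠ 0 ∧ GC4.symm ((0,0) : ZMod 2 × ZMod 2) ≠ 3 := by decide


/-- **Corollary: sufficient conditions for zero loss.** For 4-PAM
with any of the four Gray labelings, the asymptotic loss `L(B)` is zero for any
linear code `B` (with at least two codewords) that contains codewords `b''` and
`b'''` whose first (resp. second) bit is `1` in every position. -/
theorem loss_zero_any_gray (N : ℕ) (hN : 1 ≤ N)
    (L : Fin 4 ≃ (ZMod 2 × ZMod 2)) (hL : L = GC1 ∨ L = GC2 ∨ L = GC3 ∨ L = GC4)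
    (B : Submodule (ZMod 2) (Fin N → ZMod 2 × ZMod 2))
    (hB : (B : Set (Fin N → ZMod 2 × ZMod 2)).Nontrivial)
    (b'' b''' : Fin N → ZMod 2 × ZMod 2) (hb'' : b'' ∈ B) (hb''' : b''' ∈ B)
    (hall1 : ∀ k, (b'' k).1 = 1) (hall2 : ∀ k, (b''' k).2 = 1) :
    sInf {r : ℝ | ∃ b ∈ B, ∃ bh ∈ B, b ≠ bh ∧ r = aX (xb L b) (xb L bh)}
      = sInf {r : ℝ | ∃ b ∈ B, ∃ bh ∈ B, b ≠ bh ∧ r = aB (xb L b) (xb L bh)} := by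
  rcases hL with rfl | rfl | rfl | rfl
  · exact aux_main N GC1 B hB b''' hb''' shiftGC1 (fun k => ncGC1 (b''' k) (hall2 k))
  · exact aux_main N GC2 B hB b'' hb'' shiftGC2 (fun k => ncGC2 (b'' k) (hall1 k))
  · exact aux_main N GC3 B hB 0 B.zero_mem shiftGC3 (fun _ => ncGC3)
  · exact aux_main N GC4 B hB 0 B.zero_mem shiftGC4 (fun _ => ncGC4)
end

section
/- (Corollary 1, first part.) Let N ≥ 1, let L be any one of the four Gray labelings, and let B be a ZMod 2-submodule of (Fin N → ZMod 2 × ZMod 2) containing at least two elements. Then (min over pairs b ≠ b̂ in B of a^X(x_b, x_b̂)) ≤ (2/√3) · (min over pairs b ≠ b̂ in B of a^B(x_b, x_b̂)); equivalently, the asymptotic loss L(B) = 20·logb 10 (min a^X / min a^B) is at most 1.25 dB. -/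
open Finset

lemma pw_one_le {i j : Fin 4} (h : i ≠ j) : 1 ≤ pw i j := by
  unfold pw; rw [if_neg h]; split_ifs <;> norm_num

lemma one_le_betaW {N : ℕ} {x xh : Fin N → Fin 4} (h : x ≠ xh) :
    1 ≤ betaW x xh := by
  obtain ⟨k, hk⟩ := Function.ne_iff.1 h
  calc (1:ℝ) ≤ pw (x k) (xh k) := pw_one_le hk
    _ ≤ betaW x xh :=
      Finset.single_le_sum (fun j _ => pw_nonneg (x j) (xh j)) (Finset.mem_univ k)

lemma key_ineq {N : ℕ} {x xh : Fin N → Fin 4} (h : x ≠ xh) :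
    aX x xh ≤ 2 / Real.sqrt 3 * aB x xh := by
  have hβ : 1 ≤ betaW x xh := one_le_betaW h
  set β := betaW x xh with hβdef
  set w : ℝ := (wc x xh : ℝ) with hwdef
  have hw : 0 ≤ w := Nat.cast_nonneg _
  have hs3 : (0:ℝ) < Real.sqrt 3 := Real.sqrt_pos.2 (by norm_num)
  have hsβ : (0:ℝ) < Real.sqrt β := Real.sqrt_pos.2 (by linarith)
  have h32 : Real.sqrt 3 ^ 2 = 3 := Real.sq_sqrt (by norm_num)
  have hβ2 : Real.sqrt β ^ 2 = β := Real.sq_sqrt (by linarith)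
  have hRnn : 0 ≤ 2 / Real.sqrt 3 * ((β + 2 * w) / Real.sqrt β) := by positivity
  unfold aX aB
  rw [← hβdef, ← hwdef,
    show 2 / Real.sqrt 3 * ((β + 2 * w) / Real.sqrt β)
      = Real.sqrt ((2 / Real.sqrt 3 * ((β + 2 * w) / Real.sqrt β)) ^ 2) from
      (Real.sqrt_sq hRnn).symm]
  apply Real.sqrt_le_sqrt
  have expand : (2 / Real.sqrt 3 * ((β + 2 * w) / Real.sqrt β)) ^ 2
      = 4 * (β + 2 * w) ^ 2 / (3 * β) := by
    rw [mul_pow, div_pow, div_pow, h32, hβ2]; ring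
  rw [expand, le_div_iff₀ (by linarith : (0:ℝ) < 3 * β)]
  nlinarith [sq_nonneg (β - 4 * w)]

lemma one_le_aX {N : ℕ} {x xh : Fin N → Fin 4} (h : x ≠ xh) : 1 ≤ aX x xh := by
  have hβ := one_le_betaW h
  have hw : (0:ℝ) ≤ (wc x xh : ℝ) := Nat.cast_nonneg _
  unfold aX
  rw [show (1:ℝ) = Real.sqrt 1 from (Real.sqrt_one).symm]
  exact Real.sqrt_le_sqrt (by linarith)

lemma one_le_aB {N : ℕ} {x xh : Fin N → Fin 4} (h : x ≠ xh) : 1 ≤ aB x xh := by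
  have hβ := one_le_betaW h
  have hw : (0:ℝ) ≤ (wc x xh : ℝ) := Nat.cast_nonneg _
  have hsβ : (0:ℝ) < Real.sqrt (betaW x xh) := Real.sqrt_pos.2 (by linarith)
  have h1 : 1 ≤ Real.sqrt (betaW x xh) := by
    rw [show (1:ℝ) = Real.sqrt 1 from (Real.sqrt_one).symm]
    exact Real.sqrt_le_sqrt (by linarith)
  have hβ2 : Real.sqrt (betaW x xh) ^ 2 = betaW x xh :=
    Real.sq_sqrt (by linarith)
  unfold aB
  rw [le_div_iff₀ hsβ]
  nlinarith

/-- **Corollary 1, first part.** For 4-PAM with any Gray labeling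
and any linear code `B` (with at least two codewords), the asymptotic loss
`L(B) = 20·log₁₀(min a^X / min a^B)` is at most 1.25 dB. -/
theorem loss_code_le (N : ℕ) (hN : 1 ≤ N)
    (L : Fin 4 ≃ (ZMod 2 × ZMod 2)) (hL : L = GC1 ∨ L = GC2 ∨ L = GC3 ∨ L = GC4)
    (B : Submodule (ZMod 2) (Fin N → ZMod 2 × ZMod 2))
    (hB : (B : Set (Fin N → ZMod 2 × ZMod 2)).Nontrivial) :
    sInf {r : ℝ | ∃ b ∈ B, ∃ bh ∈ B, b ≠ bh ∧ r = aX (xb L b) (xb L bh)}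
        ≤ (2 / Real.sqrt 3)
          * sInf {r : ℝ | ∃ b ∈ B, ∃ bh ∈ B, b ≠ bh ∧ r = aB (xb L b) (xb L bh)}
    ∧ 20 * Real.logb 10
        (sInf {r : ℝ | ∃ b ∈ B, ∃ bh ∈ B, b ≠ bh ∧ r = aX (xb L b) (xb L bh)}
          / sInf {r : ℝ | ∃ b ∈ B, ∃ bh ∈ B, b ≠ bh ∧ r = aB (xb L b) (xb L bh)})
        ≤ 1.25 := by
  set S₁ := {r : ℝ | ∃ b ∈ B, ∃ bh ∈ B, b ≠ bh ∧ r = aX (xb L b) (xb L bh)} with hS₁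
  set S₂ := {r : ℝ | ∃ b ∈ B, ∃ bh ∈ B, b ≠ bh ∧ r = aB (xb L b) (xb L bh)} with hS₂
  have hxne : ∀ b bh : Fin N → ZMod 2 × ZMod 2, b ≠ bh → xb L b ≠ xb L bh := by
    intro b bh hne h
    exact hne (funext fun k => L.symm.injective (congrFun h k))
  obtain ⟨b₀, hb₀, b₁, hb₁, hne01⟩ := hB
  have hne1 : S₁.Nonempty := ⟨_, b₀, hb₀, b₁, hb₁, hne01, rfl⟩
  have hne2 : S₂.Nonempty := ⟨_, b₀, hb₀, b₁, hb₁, hne01, rfl⟩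
  have hlb1 : ∀ r ∈ S₁, (1:ℝ) ≤ r := by
    rintro r ⟨b, hb, bh, hbh, hbne, rfl⟩
    exact one_le_aX (hxne _ _ hbne)
  have hlb2 : ∀ r ∈ S₂, (1:ℝ) ≤ r := by
    rintro r ⟨b, hb, bh, hbh, hbne, rfl⟩
    exact one_le_aB (hxne _ _ hbne)
  have hbdd1 : BddBelow S₁ := ⟨1, hlb1⟩
  have hs3 : (0:ℝ) < Real.sqrt 3 := Real.sqrt_pos.2 (by norm_num)
  have hc : (0:ℝ) < 2 / Real.sqrt 3 := by positivity
  have hm1 : 1 ≤ sInf S₁ := le_csInf hne1 hlb1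
  have hm2 : 1 ≤ sInf S₂ := le_csInf hne2 hlb2
  have hmain : sInf S₁ ≤ 2 / Real.sqrt 3 * sInf S₂ := by
    have h1 : ∀ r ∈ S₂, sInf S₁ / (2 / Real.sqrt 3) ≤ r := by
      rintro r ⟨b, hb, bh, hbh, hbne, rfl⟩
      rw [div_le_iff₀ hc, mul_comm]
      calc sInf S₁ ≤ aX (xb L b) (xb L bh) :=
            csInf_le hbdd1 ⟨b, hb, bh, hbh, hbne, rfl⟩
        _ ≤ 2 / Real.sqrt 3 * aB (xb L b) (xb L bh) := key_ineq (hxne _ _ hbne)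
    have h2 : sInf S₁ / (2 / Real.sqrt 3) ≤ sInf S₂ := le_csInf hne2 h1
    rw [div_le_iff₀ hc] at h2
    linarith [h2, mul_comm (sInf S₂) (2 / Real.sqrt 3)]
  refine ⟨hmain, ?_⟩
  have hratio : sInf S₁ / sInf S₂ ≤ 2 / Real.sqrt 3 := by
    rw [div_le_iff₀ (by linarith : (0:ℝ) < sInf S₂)]
    calc sInf S₁ ≤ 2 / Real.sqrt 3 * sInf S₂ := hmain
      _ = 2 / Real.sqrt 3 * sInf S₂ := rfl
  have hratpos : 0 < sInf S₁ / sInf S₂ := by positivity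
  have hlog1 : Real.logb 10 (sInf S₁ / sInf S₂) ≤ Real.logb 10 (2 / Real.sqrt 3) :=
    Real.logb_le_logb_of_le (by norm_num) hratpos hratio
  have hlog10 : 0 < Real.log 10 := Real.log_pos (by norm_num)
  have hpow : ((2:ℝ) / Real.sqrt 3) ^ 16 = 65536 / 6561 := by
    have h3 : Real.sqrt 3 ^ 16 = 3 ^ 8 := by
      rw [show (16:ℕ) = 2 * 8 from rfl, pow_mul, Real.sq_sqrt (by norm_num : (0:ℝ) ≤ 3)]
    rw [div_pow, h3]; norm_num
  have hkey : 16 * Real.log (2 / Real.sqrt 3) ≤ Real.log 10 := by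
    have h1 : ((2:ℝ) / Real.sqrt 3) ^ 16 ≤ 10 := by rw [hpow]; norm_num
    have := Real.log_le_log (by positivity) h1
    rwa [Real.log_pow, Nat.cast_ofNat] at this
  have hend : 20 * Real.logb 10 (2 / Real.sqrt 3) ≤ 1.25 := by
    rw [Real.logb, show (1.25:ℝ) = 1.25 from rfl]
    rw [div_eq_mul_inv]
    nlinarith [hkey, hlog10, mul_pos hlog10 hlog10,
      mul_le_mul_of_nonneg_right hkey (le_of_lt (inv_pos.2 hlog10)),
      mul_inv_cancel₀ (ne_of_gt hlog10)]
  calc 20 * Real.logb 10 (sInf S₁ / sInf S₂)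
      ≤ 20 * Real.logb 10 (2 / Real.sqrt 3) := by linarith
    _ ≤ 1.25 := hend
end
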